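/- Let Y_1, Y_2, ... be i.i.d. nonnegative random variables such that P[Y_1 ≥ t] ≤ C_1·exp(-t^α) for all t ≥ 0, for some constants C_1 > 0 and 0 < α < 1. Then E[Y_1] < ∞, and moreover there exist constants a > 0, 0 < β < 1, and C_2 > 0 such that P[∑_{i=1}^n Y_i ≥ a·n] ≤ C_2·exp(-n^β) for all n ≥ 1. -/

import Mathlib

open MeasureTheory ProbabilityTheory Finset Real Filter

lemma aux_int_exp {α : ℝ} (hα : 0 < α) :
    IntegrableOn (fun t : ℝ => Real.exp (-(t ^ α))) (Set.Ioi 0) := by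
  have h1 : IntegrableOn (fun x : ℝ => Real.exp (-x) * x ^ ((1/α) - 1)) (Set.Ioi 0) :=
    Real.GammaIntegral_convergent (by positivity)
  refine (integrableOn_Ioi_comp_rpow_iff' (fun t : ℝ => Real.exp (-(t ^ α))) (p := 1/α)
    (by positivity)).mp (h1.congr_fun (fun x hx => ?_) measurableSet_Ioi)
  have hx0 : (0:ℝ) < x := hx
  simp only [smul_eq_mul]
  rw [← Real.rpow_mul hx0.le, one_div_mul_cancel hα.ne', Real.rpow_one, mul_comm]

lemma aux_integrable {Ω : Type*} [MeasurableSpace Ω] (μ : Measure Ω) [IsProbabilityMeasure μ]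
    (f : Ω → ℝ) (hf : Measurable f) (hpos : ∀ ω, 0 ≤ f ω) {C₁ α : ℝ} (hα : 0 < α)
    (htail : ∀ t : ℝ, 0 ≤ t → μ {ω | t ≤ f ω} ≤ ENNReal.ofReal (C₁ * Real.exp (-(t ^ α)))) :
    Integrable f μ := by
  refine ⟨hf.aestronglyMeasurable, ?_⟩
  rw [hasFiniteIntegral_iff_ofReal (Filter.Eventually.of_forall hpos)]
  rw [lintegral_eq_lintegral_meas_le μ (Filter.Eventually.of_forall hpos) hf.aemeasurable]
  have hb : ∫⁻ t in Set.Ioi 0, μ {a | t ≤ f a}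
      ≤ ∫⁻ t in Set.Ioi 0, ENNReal.ofReal (C₁ * Real.exp (-(t ^ α))) := by
    refine setLIntegral_mono ?_ (fun t ht => htail t (le_of_lt ht))
    fun_prop
  refine lt_of_le_of_lt hb ?_
  have : IntegrableOn (fun t : ℝ => C₁ * Real.exp (-(t ^ α))) (Set.Ioi 0) :=
    (aux_int_exp hα).const_mul C₁
  exact this.lintegral_lt_top

lemma aux_sqrt_le {y : ℝ} (hy : 4 ≤ y) : y ^ ((1:ℝ)/2) ≤ y / 2 := by
  have h0 : (0:ℝ) < y := by linarith
  have hs : y ^ ((1:ℝ)/2) * y ^ ((1:ℝ)/2) = y := by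
    rw [← Real.rpow_add h0]; norm_num
  have hsnn : 0 ≤ y ^ ((1:ℝ)/2) := Real.rpow_nonneg h0.le _
  nlinarith [hs, hsnn]

lemma aux_calib {α C₁ : ℝ} (hα0 : 0 < α) (hC₁ : 0 < C₁) :
    ∃ N : ℕ, ∀ n : ℕ, N ≤ n →
      C₁ * (n : ℝ) * Real.exp (-((n:ℝ) ^ (α/2))) ≤ Real.exp (-((n:ℝ) ^ (α/4))) := by
  have key : Filter.Tendsto (fun y : ℝ => C₁ * (y ^ (2/α) * Real.exp (-(1/2) * y)))
      Filter.atTop (nhds 0) := by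
    simpa using (tendsto_rpow_mul_exp_neg_mul_atTop_nhds_zero (2/α) (1/2) one_half_pos).const_mul C₁
  have key2 : Filter.Tendsto (fun y : ℝ => C₁ * y ^ (2/α) * Real.exp (y ^ ((1:ℝ)/2) - y))
      Filter.atTop (nhds 0) := by
    refine squeeze_zero' ?_ ?_ key
    · filter_upwards [Filter.eventually_ge_atTop (0:ℝ)] with y hy
      positivity
    · filter_upwards [Filter.eventually_ge_atTop (4:ℝ)] with y hy
      have h1 : y ^ ((1:ℝ)/2) - y ≤ -(1/2) * y := by
        have := aux_sqrt_le hy; linarith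
      have h2 : Real.exp (y ^ ((1:ℝ)/2) - y) ≤ Real.exp (-(1/2) * y) := Real.exp_le_exp.mpr h1
      have h3 : 0 ≤ C₁ * y ^ (2/α) := by positivity
      calc C₁ * y ^ (2/α) * Real.exp (y ^ ((1:ℝ)/2) - y)
          ≤ C₁ * y ^ (2/α) * Real.exp (-(1/2) * y) := by gcongr
        _ = C₁ * (y ^ (2/α) * Real.exp (-(1/2) * y)) := by ring
  have key3 : Filter.Tendsto (fun x : ℝ => C₁ * x * Real.exp (x ^ (α/4) - x ^ (α/2)))
      Filter.atTop (nhds 0) := by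
    have hcomp := key2.comp (tendsto_rpow_atTop (show 0 < α/2 by positivity))
    refine hcomp.congr' ?_
    filter_upwards [Filter.eventually_gt_atTop (0:ℝ)] with x hx
    simp only [Function.comp_apply]
    rw [← Real.rpow_mul hx.le, ← Real.rpow_mul hx.le]
    rw [show (α/2) * (2/α) = 1 by field_simp, show (α/2) * ((1:ℝ)/2) = α/4 by ring,
      Real.rpow_one]
  have key4 := (key3.comp tendsto_natCast_atTop_atTop).eventually
    (gt_mem_nhds (show (0:ℝ) < 1 by norm_num))
  obtain ⟨N, hN⟩ := Filter.eventually_atTop.mp key4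
  refine ⟨N, fun n hn => ?_⟩
  have h1 : C₁ * (n:ℝ) * Real.exp ((n:ℝ) ^ (α/4) - (n:ℝ) ^ (α/2)) ≤ 1 := (hN n hn).le
  have h2 : (0:ℝ) < Real.exp (-((n:ℝ) ^ (α/4))) := Real.exp_pos _
  have h3 : Real.exp ((n:ℝ) ^ (α/4) - (n:ℝ) ^ (α/2)) * Real.exp (-((n:ℝ) ^ (α/4)))
      = Real.exp (-((n:ℝ) ^ (α/2))) := by
    rw [← Real.exp_add]; ring_nf
  calc C₁ * (n:ℝ) * Real.exp (-((n:ℝ) ^ (α/2)))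
      = (C₁ * (n:ℝ) * Real.exp ((n:ℝ) ^ (α/4) - (n:ℝ) ^ (α/2))) * Real.exp (-((n:ℝ) ^ (α/4))) := by
        rw [← h3]; ring
    _ ≤ 1 * Real.exp (-((n:ℝ) ^ (α/4))) := mul_le_mul_of_nonneg_right h1 h2.le
    _ = Real.exp (-((n:ℝ) ^ (α/4))) := one_mul _

lemma aux_exp_le {x : ℝ} (h0 : 0 ≤ x) (h1 : x ≤ 1) : Real.exp x ≤ 1 + Real.exp 1 * x := by
  have h3 : (1 - x) ≤ Real.exp (-x) := by
    have := Real.add_one_le_exp (-x); linarith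
  have h2 : (1 - x) * Real.exp x ≤ 1 := by
    calc (1 - x) * Real.exp x ≤ Real.exp (-x) * Real.exp x :=
          mul_le_mul_of_nonneg_right h3 (Real.exp_pos x).le
      _ = 1 := by rw [← Real.exp_add]; simp
  have h4 : Real.exp x ≤ Real.exp 1 := Real.exp_le_exp.mpr h1
  nlinarith [Real.exp_pos x]

lemma aux_main {Ω : Type*} [MeasurableSpace Ω] (μ : Measure Ω) [IsProbabilityMeasure μ]
    (Y : ℕ → Ω → ℝ) (C₁ α : ℝ) (hC₁ : 0 < C₁) (hα0 : 0 < α)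
    (hmeas : ∀ i, Measurable (Y i))
    (hnonneg : ∀ i ω, 0 ≤ Y i ω)
    (hindep : iIndepFun Y μ)
    (hident : ∀ i, Measure.map (Y i) μ = Measure.map (Y 0) μ)
    (htail : ∀ t : ℝ, 0 ≤ t →
      μ {ω | t ≤ Y 0 ω} ≤ ENNReal.ofReal (C₁ * Real.exp (-(t ^ α))))
    (hint : Integrable (Y 0) μ) (n : ℕ) (hn : 1 ≤ n) :
    μ {ω | (Real.exp 1 * (∫ ω, Y 0 ω ∂μ) + 1) * n ≤ ∑ i ∈ range n, Y i ω}
      ≤ ENNReal.ofReal (Real.exp (-((n:ℝ) ^ ((1:ℝ)/2)))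
          + C₁ * n * Real.exp (-((((n:ℝ) ^ ((1:ℝ)/2))) ^ α))) := by
  set m := ∫ ω, Y 0 ω ∂μ with hm_def
  have hm : 0 ≤ m := integral_nonneg (hnonneg 0)
  set a := Real.exp 1 * m + 1 with ha_def
  set t := (n:ℝ) ^ ((1:ℝ)/2) with ht_def
  have hn1 : (1:ℝ) ≤ (n:ℝ) := by exact_mod_cast hn
  have ht1 : 1 ≤ t := Real.one_le_rpow hn1 (by norm_num)
  have ht0 : 0 < t := lt_of_lt_of_le one_pos ht1
  have htt : t * t = (n:ℝ) := by
    rw [ht_def, ← Real.rpow_add (by linarith : (0:ℝ) < (n:ℝ))]; norm_num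
  set lam := t⁻¹ with hlam_def
  have hlam0 : 0 < lam := inv_pos.mpr ht0
  have hlamt : lam * t = 1 := inv_mul_cancel₀ ht0.ne'
  set Z : ℕ → Ω → ℝ := fun i ω => min (Y i ω) t with hZ_def
  have hZmeas : ∀ i, Measurable (Z i) := fun i => (hmeas i).min measurable_const
  have hZ0 : ∀ i ω, 0 ≤ Z i ω := fun i ω => le_min (hnonneg i ω) ht0.le
  have hZt : ∀ i ω, Z i ω ≤ t := fun i ω => min_le_right _ _
  have hZle : ∀ i ω, Z i ω ≤ Y i ω := fun i ω => min_le_left _ _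
  have hZindep : iIndepFun Z μ :=
    hindep.comp (fun _ x => min x t) (fun _ => measurable_id.min measurable_const)
  have hZunit : ∀ i ω, 0 ≤ lam * Z i ω ∧ lam * Z i ω ≤ 1 := by
    intro i ω
    refine ⟨mul_nonneg hlam0.le (hZ0 i ω), ?_⟩
    calc lam * Z i ω ≤ lam * t := by
          exact mul_le_mul_of_nonneg_left (hZt i ω) hlam0.le
      _ = 1 := hlamt
  -- integrability facts
  have hZint : ∀ i, Integrable (Z i) μ := by
    intro i
    refine Integrable.mono' (integrable_const t) (hZmeas i).aestronglyMeasurable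
      (Filter.Eventually.of_forall fun ω => ?_)
    rw [Real.norm_eq_abs, abs_of_nonneg (hZ0 i ω)]; exact hZt i ω
  have hexpint : ∀ i, Integrable (fun ω => Real.exp (lam * Z i ω)) μ := by
    intro i
    refine Integrable.mono' (integrable_const (Real.exp 1))
      (((hZmeas i).const_mul lam).exp).aestronglyMeasurable ?_
    exact Filter.Eventually.of_forall fun ω => by
      rw [Real.norm_eq_abs, abs_of_pos (Real.exp_pos _)]
      exact Real.exp_le_exp.mpr (hZunit i ω).2
  -- identical distribution of truncations: mgf equal
  have hcont : Continuous fun x : ℝ => Real.exp (lam * min x t) := by fun_prop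
  have hmgf_eq : ∀ i, mgf (Z i) μ lam = mgf (Z 0) μ lam := by
    intro i
    simp only [mgf]
    calc ∫ ω, Real.exp (lam * Z i ω) ∂μ
        = ∫ x, Real.exp (lam * min x t) ∂(Measure.map (Y i) μ) :=
          (integral_map (hmeas i).aemeasurable hcont.aestronglyMeasurable).symm
      _ = ∫ x, Real.exp (lam * min x t) ∂(Measure.map (Y 0) μ) := by rw [hident i]
      _ = ∫ ω, Real.exp (lam * Z 0 ω) ∂μ :=
          integral_map (hmeas 0).aemeasurable hcont.aestronglyMeasurable
  -- mgf bound
  have hq : mgf (Z 0) μ lam ≤ Real.exp (Real.exp 1 * lam * m) := by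
    have step1 : mgf (Z 0) μ lam ≤ ∫ ω, (1 + Real.exp 1 * (lam * Z 0 ω)) ∂μ := by
      simp only [mgf]
      refine integral_mono (hexpint 0) ?_ ?_
      · exact (integrable_const 1).add (((hZint 0).const_mul lam).const_mul (Real.exp 1))
      · exact fun ω => aux_exp_le (hZunit 0 ω).1 (hZunit 0 ω).2
    have step2 : ∫ ω, (1 + Real.exp 1 * (lam * Z 0 ω)) ∂μ
        = 1 + Real.exp 1 * lam * ∫ ω, Z 0 ω ∂μ := by
      rw [integral_add (integrable_const 1) (((hZint 0).const_mul lam).const_mul (Real.exp 1))]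
      simp [integral_const, mul_assoc, integral_const_mul]
    have step3 : ∫ ω, Z 0 ω ∂μ ≤ m := integral_mono (hZint 0) hint (fun ω => hZle 0 ω)
    have step4 : 1 + Real.exp 1 * lam * ∫ ω, Z 0 ω ∂μ ≤ 1 + Real.exp 1 * lam * m := by
      have : 0 ≤ Real.exp 1 * lam := by positivity
      nlinarith
    have step5 : 1 + Real.exp 1 * lam * m ≤ Real.exp (Real.exp 1 * lam * m) := by
      have := Real.add_one_le_exp (Real.exp 1 * lam * m); linarith
    linarith
  -- Chernoff bound for truncated sum
  have hintS : Integrable (fun ω => Real.exp (lam * (∑ i ∈ range n, Z i) ω)) μ := by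
    refine Integrable.mono' (integrable_const (Real.exp (n:ℝ)))
      ?_ (Filter.Eventually.of_forall fun ω => ?_)
    · refine Measurable.aestronglyMeasurable ?_
      simp only [Finset.sum_apply]
      exact (Measurable.const_mul (Finset.measurable_sum _ (fun i _ => hZmeas i)) lam).exp
    · rw [Real.norm_eq_abs, abs_of_pos (Real.exp_pos _)]
      apply Real.exp_le_exp.mpr
      rw [Finset.sum_apply, Finset.mul_sum]
      calc ∑ i ∈ range n, lam * Z i ω ≤ ∑ _i ∈ range n, (1:ℝ) :=
            Finset.sum_le_sum fun i _ => (hZunit i ω).2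
        _ = (n:ℝ) := by simp
  have hcher := measure_ge_le_exp_mul_mgf (μ := μ) (X := ∑ i ∈ range n, Z i)
    (a * n) hlam0.le hintS
  have hmgfsum : mgf (∑ i ∈ range n, Z i) μ lam ≤ Real.exp ((n:ℝ) * (Real.exp 1 * lam * m)) := by
    rw [hZindep.mgf_sum hZmeas]
    calc ∏ i ∈ range n, mgf (Z i) μ lam = (mgf (Z 0) μ lam) ^ n := by
          rw [Finset.prod_congr rfl fun i _ => hmgf_eq i, Finset.prod_const, Finset.card_range]
      _ ≤ (Real.exp (Real.exp 1 * lam * m)) ^ n := by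
          exact pow_le_pow_left₀ (mgf_nonneg) hq n
      _ = Real.exp ((n:ℝ) * (Real.exp 1 * lam * m)) := by
          rw [← Real.exp_nat_mul]
  have hlamn : lam * (n:ℝ) = t := by
    rw [hlam_def, ← htt]; field_simp
  have hexp_eq : -lam * (a * n) + (n:ℝ) * (Real.exp 1 * lam * m) = -t := by
    have : -lam * (a * n) + (n:ℝ) * (Real.exp 1 * lam * m) = -(lam * n) * (a - Real.exp 1 * m) := by
      ring
    rw [this, hlamn, ha_def]; ring
  have hcher2 : (μ {ω | a * n ≤ (∑ i ∈ range n, Z i) ω}).toReal ≤ Real.exp (-t) := by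
    calc (μ {ω | a * n ≤ (∑ i ∈ range n, Z i) ω}).toReal
        ≤ Real.exp (-lam * (a * n)) * mgf (∑ i ∈ range n, Z i) μ lam := hcher
      _ ≤ Real.exp (-lam * (a * n)) * Real.exp ((n:ℝ) * (Real.exp 1 * lam * m)) := by
          exact mul_le_mul_of_nonneg_left hmgfsum (Real.exp_pos _).le
      _ = Real.exp (-t) := by rw [← Real.exp_add, hexp_eq]
  have hA : μ {ω | a * n ≤ (∑ i ∈ range n, Z i) ω} ≤ ENNReal.ofReal (Real.exp (-t)) :=
    (ENNReal.le_ofReal_iff_toReal_le (measure_ne_top μ _) (Real.exp_pos _).le).mpr hcher2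
  -- union bound part
  have htailZ : ∀ i, μ {ω | t ≤ Y i ω} ≤ ENNReal.ofReal (C₁ * Real.exp (-(t ^ α))) := by
    intro i
    have h1 : {ω | t ≤ Y i ω} = Y i ⁻¹' (Set.Ici t) := rfl
    have h2 : {ω | t ≤ Y 0 ω} = Y 0 ⁻¹' (Set.Ici t) := rfl
    rw [h1, ← Measure.map_apply (hmeas i) measurableSet_Ici, hident i,
      Measure.map_apply (hmeas 0) measurableSet_Ici, ← h2]
    exact htail t ht0.le
  have hsub : {ω | a * n ≤ ∑ i ∈ range n, Y i ω}
      ⊆ {ω | a * n ≤ (∑ i ∈ range n, Z i) ω} ∪ ⋃ i ∈ range n, {ω | t ≤ Y i ω} := by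
    intro ω hω
    by_cases hc : ∀ i ∈ range n, Y i ω < t
    · left
      have heq : ∑ i ∈ range n, Z i ω = ∑ i ∈ range n, Y i ω :=
        Finset.sum_congr rfl fun i hi => min_eq_left (hc i hi).le
      show a * n ≤ (∑ i ∈ range n, Z i) ω
      rw [Finset.sum_apply, heq]
      exact hω
    · right
      push_neg at hc
      obtain ⟨i, hi, hti⟩ := hc
      exact Set.mem_biUnion hi hti
  have hunion : μ (⋃ i ∈ range n, {ω | t ≤ Y i ω})
      ≤ ENNReal.ofReal (C₁ * (n:ℝ) * Real.exp (-(t ^ α))) := by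
    calc μ (⋃ i ∈ range n, {ω | t ≤ Y i ω})
        ≤ ∑ i ∈ range n, μ {ω | t ≤ Y i ω} := measure_biUnion_finset_le _ _
      _ ≤ ∑ _i ∈ range n, ENNReal.ofReal (C₁ * Real.exp (-(t ^ α))) :=
          Finset.sum_le_sum fun i _ => htailZ i
      _ = (n:ℕ) • ENNReal.ofReal (C₁ * Real.exp (-(t ^ α))) := by
          rw [Finset.sum_const, Finset.card_range]
      _ = ENNReal.ofReal (C₁ * (n:ℝ) * Real.exp (-(t ^ α))) := by
          rw [nsmul_eq_mul, ← ENNReal.ofReal_natCast n, ← ENNReal.ofReal_mul (by positivity)]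
          ring_nf
  calc μ {ω | a * n ≤ ∑ i ∈ range n, Y i ω}
      ≤ μ ({ω | a * n ≤ (∑ i ∈ range n, Z i) ω} ∪ ⋃ i ∈ range n, {ω | t ≤ Y i ω}) :=
        measure_mono hsub
    _ ≤ μ {ω | a * n ≤ (∑ i ∈ range n, Z i) ω} + μ (⋃ i ∈ range n, {ω | t ≤ Y i ω}) :=
        measure_union_le _ _
    _ ≤ ENNReal.ofReal (Real.exp (-t)) + ENNReal.ofReal (C₁ * (n:ℝ) * Real.exp (-(t ^ α))) :=
        add_le_add hA hunion
    _ = ENNReal.ofReal (Real.exp (-t) + C₁ * (n:ℝ) * Real.exp (-(t ^ α))) := by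
        rw [← ENNReal.ofReal_add (Real.exp_pos _).le (by positivity)]
    _ = ENNReal.ofReal (Real.exp (-((n:ℝ) ^ ((1:ℝ)/2))) + C₁ * (n:ℝ) * Real.exp (-(t ^ α))) := rfl


/-- (Nagaev-type bound.) If `Y_1, Y_2, …` are i.i.d. nonnegative random
variables with stretched-exponential tails `P[Y_i ≥ t] ≤ C₁ exp(-t^α)`
(`C₁ > 0`, `0 < α < 1`), then `E[Y_1] < ∞` and there exist `a > 0`,
`0 < β < 1` and `C₂ > 0` such that `P[∑_{i=1}^n Y_i ≥ a·n] ≤ C₂ exp(-n^β)`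
for all `n ≥ 1`. -/
theorem stmt_10 {Ω : Type*} [MeasurableSpace Ω] (μ : Measure Ω) [IsProbabilityMeasure μ]
    (Y : ℕ → Ω → ℝ) (C₁ α : ℝ) (hC₁ : 0 < C₁) (hα0 : 0 < α) (hα1 : α < 1)
    (hmeas : ∀ i, Measurable (Y i))
    (hnonneg : ∀ i ω, 0 ≤ Y i ω)
    (hindep : iIndepFun Y μ)
    (hident : ∀ i, Measure.map (Y i) μ = Measure.map (Y 0) μ)
    (htail : ∀ t : ℝ, 0 ≤ t →
      μ {ω | t ≤ Y 0 ω} ≤ ENNReal.ofReal (C₁ * Real.exp (-(t ^ α)))) :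
    Integrable (Y 0) μ ∧
      ∃ a : ℝ, 0 < a ∧ ∃ β : ℝ, 0 < β ∧ β < 1 ∧ ∃ C₂ : ℝ, 0 < C₂ ∧
        ∀ n : ℕ, 1 ≤ n →
          μ {ω | a * n ≤ ∑ i ∈ range n, Y i ω}
            ≤ ENNReal.ofReal (C₂ * Real.exp (-((n : ℝ) ^ β))) := by
  have hint : Integrable (Y 0) μ := aux_integrable μ (Y 0) (hmeas 0) (hnonneg 0) hα0 htail
  have hm : 0 ≤ ∫ ω, Y 0 ω ∂μ := integral_nonneg (hnonneg 0)
  obtain ⟨N, hN⟩ := aux_calib hα0 hC₁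
  refine ⟨hint, Real.exp 1 * (∫ ω, Y 0 ω ∂μ) + 1, by positivity, α/4,
    by positivity, by linarith, 2 + Real.exp ((N:ℝ) ^ (α/4)), by positivity, fun n hn => ?_⟩
  have hn1 : (1:ℝ) ≤ (n:ℝ) := by exact_mod_cast hn
  have hn0 : (0:ℝ) ≤ (n:ℝ) := by linarith
  rcases le_or_gt N n with hNn | hNn
  · have hmain := aux_main μ Y C₁ α hC₁ hα0 hmeas hnonneg hindep hident htail hint n hn
    refine le_trans hmain (ENNReal.ofReal_le_ofReal ?_)
    have hcast : (((n:ℝ) ^ ((1:ℝ)/2)) ^ α) = (n:ℝ) ^ (α/2) := by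
      rw [← Real.rpow_mul hn0]; ring_nf
    have e1 : Real.exp (-((n:ℝ) ^ ((1:ℝ)/2))) ≤ Real.exp (-((n:ℝ) ^ (α/4))) := by
      apply Real.exp_le_exp.mpr
      apply neg_le_neg
      exact Real.rpow_le_rpow_of_exponent_le hn1 (by linarith)
    have e2 : C₁ * (n:ℝ) * Real.exp (-((n:ℝ) ^ (α/2))) ≤ Real.exp (-((n:ℝ) ^ (α/4))) :=
      hN n hNn
    rw [hcast]
    have e3 : (0:ℝ) < Real.exp (-((n:ℝ) ^ (α/4))) := Real.exp_pos _
    have e4 : (0:ℝ) < Real.exp ((N:ℝ) ^ (α/4)) := Real.exp_pos _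
    nlinarith
  · calc μ {ω | (Real.exp 1 * (∫ ω, Y 0 ω ∂μ) + 1) * n ≤ ∑ i ∈ range n, Y i ω}
        ≤ 1 := prob_le_one
      _ ≤ ENNReal.ofReal ((2 + Real.exp ((N:ℝ) ^ (α/4))) * Real.exp (-((n:ℝ) ^ (α/4)))) := by
          rw [← ENNReal.ofReal_one]
          apply ENNReal.ofReal_le_ofReal
          have h1 : (n:ℝ) ^ (α/4) ≤ (N:ℝ) ^ (α/4) :=
            Real.rpow_le_rpow hn0 (by exact_mod_cast hNn.le) (by positivity)
          have h2 : (1:ℝ) ≤ Real.exp ((N:ℝ) ^ (α/4)) * Real.exp (-((n:ℝ) ^ (α/4))) := by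
            rw [← Real.exp_add]
            apply Real.one_le_exp
            linarith
          have h3 : (0:ℝ) < Real.exp (-((n:ℝ) ^ (α/4))) := Real.exp_pos _
          nlinarith
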